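/- There exists an R-module basis b : Fin d → A of A with b 0 = 1; consequently the quotient R-module A ⧸ Submodule.span R {(1 : A)} is free of rank d − 1. -/

import Mathlib

open Submodule

/-- Over a nontrivial local ring, some coordinate of `1` in a finite basis is a unit. -/
lemma stmt6_aux_unit (R A : Type*) [CommRing R] [Nontrivial R] [IsLocalRing R]
    [CommRing A] [Algebra R A] (d : ℕ) (hd : 1 ≤ d) (B : Module.Basis (Fin d) R A) :
    ∃ i, IsUnit (B.repr 1 i) := by
  by_contra h
  push_neg at h
  have hm : ∀ i, B.repr 1 i ∈ IsLocalRing.maximalIdeal R := fun i =>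
    (IsLocalRing.mem_maximalIdeal _).mpr (h i)
  have h1 : (1 : A) ∈ (IsLocalRing.maximalIdeal R) • (⊤ : Submodule R A) := by
    have := B.sum_repr 1
    rw [← this]
    exact Submodule.sum_mem _ fun i _ => Submodule.smul_mem_smul (hm i) trivial
  have htop : (⊤ : Submodule R A) ≤ (IsLocalRing.maximalIdeal R) • ⊤ := by
    intro x _
    have : x * 1 ∈ (IsLocalRing.maximalIdeal R) • (⊤ : Submodule R A) := by
      refine Submodule.smul_induction_on h1 (fun r hr n _ => ?_) (fun y z hy hz => ?_)
      · rw [mul_smul_comm]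
        exact Submodule.smul_mem_smul hr trivial
      · rw [mul_add]; exact add_mem hy hz
    rwa [mul_one] at this
  have hfin : Module.Finite R A := Module.Finite.of_basis B
  have hbot := Submodule.eq_bot_of_le_smul_of_le_jacobson_bot (IsLocalRing.maximalIdeal R) ⊤
    (Module.finite_def.mp hfin) htop (IsLocalRing.maximalIdeal_le_jacobson ⊥)
  have hz : B ⟨0, hd⟩ = 0 := by
    have hmem : B ⟨0, hd⟩ ∈ (⊤ : Submodule R A) := trivial
    rwa [hbot, Submodule.mem_bot] at hmem
  exact B.ne_zero _ hz

/-- If some coordinate of `1` is a unit, we can replace the corresponding basis vector by `1`. -/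
lemma stmt6_aux_basis (R A : Type*) [CommRing R] [Nontrivial R]
    [CommRing A] [Algebra R A] (d : ℕ) (hd : 1 ≤ d) (B : Module.Basis (Fin d) R A)
    (i : Fin d) (hi : IsUnit (B.repr 1 i)) :
    ∃ b : Module.Basis (Fin d) R A, b ⟨0, hd⟩ = 1 := by
  set i0 : Fin d := ⟨0, hd⟩ with hi0
  set B' := B.reindex (Equiv.swap i i0) with hB'
  have hrepr : ∀ (x : A) (j : Fin d), B'.repr x j = B.repr x (Equiv.swap i i0 j) := by
    intro x j
    rw [hB', Module.Basis.repr_reindex_apply, Equiv.symm_swap]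
  have hu : IsUnit (B'.repr 1 i0) := by
    rw [hrepr, Equiv.swap_apply_right]; exact hi
  set v : Fin d → A := Function.update (⇑B') i0 1 with hv
  have hmat : B'.toMatrix v = Matrix.updateCol 1 i0 (fun k => B'.repr 1 k) := by
    ext k j
    rw [Module.Basis.toMatrix_apply]
    by_cases hj : j = i0
    · subst hj
      simp [hv, Matrix.updateCol_self]
    · rw [hv, Function.update_of_ne hj, Matrix.updateCol_ne hj, Module.Basis.repr_self,
        Matrix.one_apply, Finsupp.single_apply]
      by_cases hkj : j = k
      · rw [if_pos hkj, if_pos hkj.symm]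
      · rw [if_neg hkj, if_neg (Ne.symm hkj)]
  have hdet : IsUnit (B'.det v) := by
    rw [Module.Basis.det_apply, hmat, ← Matrix.cramer_apply, Matrix.cramer_one]
    exact hu
  obtain ⟨hli, hsp⟩ := (Module.Basis.is_basis_iff_det B').mpr hdet
  refine ⟨Module.Basis.mk hli hsp.ge, ?_⟩
  rw [Module.Basis.coe_mk]
  show Function.update (⇑B') i0 1 i0 = 1
  rw [Function.update_self]

/-- Quotient by the span of a basis vector equal to `1` is free of rank `d - 1`. -/
lemma stmt6_aux_quot (R A : Type*) [CommRing R] [Nontrivial R]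
    [CommRing A] [Algebra R A] (d : ℕ) (hd : 1 ≤ d) (b : Module.Basis (Fin d) R A)
    (hb : b ⟨0, hd⟩ = 1) :
    Nonempty (Module.Basis (Fin (d - 1)) R (A ⧸ Submodule.span R {(1 : A)})) := by
  set i0 : Fin d := ⟨0, hd⟩ with hi0
  set s : Fin (d - 1) → Fin d := fun j => ⟨j + 1, by omega⟩ with hs
  set g : A →ₗ[R] (Fin (d - 1) → R) :=
    (LinearMap.funLeft R R s).comp b.equivFun.toLinearMap with hg
  have hgapp : ∀ (x : A) (j : Fin (d-1)), g x j = b.repr x (s j) := fun x j => rfl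
  have hsurj : Function.Surjective g := by
    intro y
    refine ⟨b.equivFun.symm (fun i => if h : (i : ℕ) = 0 then 0 else y ⟨i - 1, by omega⟩), ?_⟩
    ext j
    have key : ∀ f : Fin d → R, g (b.equivFun.symm f) j = f (s j) := by
      intro f
      rw [hg, LinearMap.comp_apply, LinearEquiv.coe_coe, LinearEquiv.apply_symm_apply,
        LinearMap.funLeft_apply]
    rw [key]
    simp only [hs]
    rw [dif_neg (by omega : ¬((j : ℕ) + 1 = 0))]
    congr 1
  have hker : LinearMap.ker g = Submodule.span R {(1 : A)} := by
    apply le_antisymm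
    · intro x hx
      rw [LinearMap.mem_ker] at hx
      have hx' : ∀ j, b.repr x (s j) = 0 := fun j => by
        have := congrFun hx j; rwa [hgapp] at this
      have hcoord : ∀ i : Fin d, i ≠ i0 → b.repr x i = 0 := by
        intro i hi
        have hipos : 0 < (i : ℕ) := by
          rcases Nat.eq_zero_or_pos (i : ℕ) with h | h
          · exact absurd (Fin.ext h) hi
          · exact h
        have : i = s ⟨(i : ℕ) - 1, by omega⟩ := by
          apply Fin.ext; simp [hs]; omega
        rw [this]; exact hx' _
      have : x = b.repr x i0 • b i0 := by
        conv_lhs => rw [← b.sum_repr x]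
        rw [Finset.sum_eq_single i0]
        · intro j _ hj; rw [hcoord j hj, zero_smul]
        · intro h; exact absurd (Finset.mem_univ i0) h
      rw [this, hb]
      exact smul_mem _ _ (mem_span_singleton_self 1)
    · rw [span_le, Set.singleton_subset_iff, SetLike.mem_coe, LinearMap.mem_ker]
      ext j
      rw [hgapp, ← hb, b.repr_self, Finsupp.single_apply]
      rw [if_neg]
      · rfl
      · intro h
        have : (0 : ℕ) = (j : ℕ) + 1 := congrArg Fin.val h
        omega
  have e : (A ⧸ Submodule.span R {(1 : A)}) ≃ₗ[R] (Fin (d - 1) → R) := by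
    rw [← hker]
    exact g.quotKerEquivOfSurjective hsurj
  exact ⟨(Pi.basisFun R (Fin (d - 1))).map e.symm⟩

/-- Let `R` be a nontrivial commutative local ring, `d ≥ 1`, and `A` a
commutative `R`-algebra that is a free `R`-module with a basis indexed by `Fin d`. Then there
exists an `R`-module basis `b : Fin d → A` of `A` with `b ⟨0, hd⟩ = 1`; consequently the quotient
`A ⧸ R·1` is a free `R`-module of rank `d - 1`. -/
theorem stmt6 (R A : Type*) [CommRing R] [Nontrivial R] [IsLocalRing R]
    [CommRing A] [Algebra R A] (d : ℕ) (hd : 1 ≤ d) (B : Module.Basis (Fin d) R A) :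
    (∃ b : Module.Basis (Fin d) R A, b ⟨0, hd⟩ = 1) ∧
    Nonempty (Module.Basis (Fin (d - 1)) R (A ⧸ Submodule.span R {(1 : A)})) := by
  obtain ⟨i, hi⟩ := stmt6_aux_unit R A d hd B
  obtain ⟨b, hb⟩ := stmt6_aux_basis R A d hd B i hi
  exact ⟨⟨b, hb⟩, stmt6_aux_quot R A d hd b hb⟩
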